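/- There is no SL sentence φ (over a single agent a and atomic proposition p) such that for every NATS M and every state s of M: M, s ⊨ φ under the generalized SL semantics if and only if M, s ⊨ ψ9 under the USL semantics, where ψ9 := ⟨⟨x⟩⟩(a,x)□(⟨⟨x_0⟩⟩(a,x_0)∘p ∧ ⟨⟨x_0⟩⟩(a,x_0)∘¬p). (Sustainable control is not expressible in SL interpreted over NATS.) -/

import Mathlib

namespace USL

attribute [local instance] Classical.propDecidable

/-- A Non-deterministic Alternating Transition System (NATS). -/
structure NATS (Ag St At : Type) where
  v : St → Set At
  Ch : Ag → St → Set (Set St)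
  Ch_nonempty : ∀ a s, (Ch a s).Nonempty
  Ch_inter : ∀ a₁ a₂ : Ag, a₁ ≠ a₂ → ∀ s : St,
    ∀ c₁ ∈ Ch a₁ s, ∀ c₂ ∈ Ch a₂ s, (c₁ ∩ c₂).Nonempty

variable {Ag St At X : Type}

/-- A strategy, represented on tracks given as (history, current state). -/
structure NATS.Strategy (M : NATS Ag St At) where
  f : Ag → List St → St → Set St
  valid : ∀ a h s, f a h s ∈ M.Ch a s

/-- Translation σ^τ of a strategy by a track prefix τ. -/
def NATS.Strategy.shift {M : NATS Ag St At} (σ : M.Strategy) (τ : List St) : M.Strategy :=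
  ⟨fun a h s => σ.f a (τ ++ h) s, fun a h s => σ.valid a (τ ++ h) s⟩

/-- A (partial) assignment of strategies to variables. -/
def NATS.Assignment (M : NATS Ag St At) (X : Type) : Type := X → Option M.Strategy

def NATS.Assignment.shift {M : NATS Ag St At} (μ : M.Assignment X) (τ : List St) :
    M.Assignment X :=
  fun x => (μ x).map (fun σ => σ.shift τ)

/-- A commitment: a finite sequence over P(Ag) × X; the head is the most recent binding. -/
abbrev Commitment (Ag X : Type) := List (Set Ag × X)

/-- The choice induced by a single binding (A, x). -/
noncomputable def bindChoice {M : NATS Ag St At} (μ : M.Assignment X) (A : Set Ag) (x : X)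
    (h : List St) (s : St) : Set St :=
  match μ x with
  | some σ => if A.Nonempty then ⋂ a ∈ A, σ.f a h s else Set.univ
  | none => Set.univ

/-- The function from tracks to sets of states induced by a context (μ, κ);
    older bindings (towards the tail) have priority. -/
noncomputable def ctxFun {M : NATS Ag St At} (μ : M.Assignment X) :
    Commitment Ag X → List St → St → Set St
  | [] => fun _ _ => Set.univ
  | (A, x) :: κ => fun h s =>
      let r := ctxFun μ κ h s
      if (r ∩ bindChoice μ A x h s).Nonempty then r ∩ bindChoice μ A x h s else r

/-- One step of the transition relation of a NATS. -/
def NATS.Step (M : NATS Ag St At) (s s' : St) : Prop := ∀ a : Ag, ∃ c ∈ M.Ch a s, s' ∈ c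

/-- A path: an infinite sequence of states all of whose finite prefixes are tracks. -/
def NATS.IsPath (M : NATS Ag St At) (lam : ℕ → St) : Prop := ∀ n, M.Step (lam n) (lam (n + 1))

/-- The history λ_0 … λ_{n-1}. -/
def histOf (lam : ℕ → St) (n : ℕ) : List St := (List.range n).map lam

/-- The outcomes of a context (μ, κ) from a state s. -/
def outcomes (M : NATS Ag St At) (μ : M.Assignment X) (κ : Commitment Ag X) (s : St) :
    Set (ℕ → St) :=
  {lam | M.IsPath lam ∧ lam 0 = s ∧ ∀ n, lam (n + 1) ∈ ctxFun μ κ (histOf lam n) (lam n)}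

mutual
/-- USL state formulas. -/
inductive StateForm (Ag At X : Type) : Type where
  | atom (p : At)
  | snot (φ : StateForm Ag At X)
  | sand (φ₁ φ₂ : StateForm Ag At X)
  | exq (x : X) (φ : StateForm Ag At X)
  | bind (A : Set Ag) (x : X) (ψ : PathForm Ag At X)
  | unbind (A : Set Ag) (x : X) (ψ : PathForm Ag At X)
/-- USL path formulas. -/
inductive PathForm (Ag At X : Type) : Type where
  | ofState (φ : StateForm Ag At X)
  | pnot (ψ : PathForm Ag At X)
  | pand (ψ₁ ψ₂ : PathForm Ag At X)
  | puntil (ψ₁ ψ₂ : PathForm Ag At X)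
  | pnext (ψ : PathForm Ag At X)
end

/-- The commitment κ[A ↛ x]: every pair (B, x) is replaced by (B ∖ A, x). -/
noncomputable def unbindCom (A : Set Ag) (x : X) (κ : Commitment Ag X) : Commitment Ag X :=
  κ.map (fun e => if e.2 = x then (e.1 \ A, e.2) else e)

mutual
/-- USL satisfaction, state formulas. -/
def SatS (M : NATS Ag St At) (μ : M.Assignment X) (κ : Commitment Ag X) (s : St) :
    StateForm Ag At X → Prop
  | .atom p => p ∈ M.v s
  | .snot φ => ¬ SatS M μ κ s φ
  | .sand φ₁ φ₂ => SatS M μ κ s φ₁ ∧ SatS M μ κ s φ₂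
  | .exq x φ => ∃ σ : M.Strategy, SatS M (Function.update μ x (some σ)) κ s φ
  | .bind A x ψ => ∀ lam ∈ outcomes M μ ((A, x) :: κ) s, SatP M μ ((A, x) :: κ) lam ψ
  | .unbind A x ψ =>
      ∀ lam ∈ outcomes M μ (unbindCom A x κ) s, SatP M μ (unbindCom A x κ) lam ψ
/-- USL satisfaction, path formulas. -/
def SatP (M : NATS Ag St At) (μ : M.Assignment X) (κ : Commitment Ag X) (lam : ℕ → St) :
    PathForm Ag At X → Prop
  | .ofState φ => SatS M μ κ (lam 0) φ
  | .pnot ψ => ¬ SatP M μ κ lam ψ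
  | .pand ψ₁ ψ₂ => SatP M μ κ lam ψ₁ ∧ SatP M μ κ lam ψ₂
  | .puntil ψ₁ ψ₂ => ∃ i : ℕ,
      SatP M (μ.shift (histOf lam i)) κ (fun n => lam (n + i)) ψ₂ ∧
      ∀ j < i, SatP M (μ.shift (histOf lam j)) κ (fun n => lam (n + j)) ψ₁
  | .pnext ψ => SatP M (μ.shift [lam 0]) κ (fun n => lam (n + 1)) ψ
end

/-- The empty assignment. -/
def emptyAsg (M : NATS Ag St At) (X : Type) : M.Assignment X := fun _ => none

/-- Truth of a USL sentence at a state: empty assignment and empty commitment. -/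
def USLTrue (M : NATS Ag St At) (s : St) (φ : StateForm Ag At X) : Prop :=
  SatS M (emptyAsg M X) [] s φ

mutual
/-- Free variables of a state formula. -/
def freeS : StateForm Ag At X → Set X
  | .atom _ => ∅
  | .snot φ => freeS φ
  | .sand φ₁ φ₂ => freeS φ₁ ∪ freeS φ₂
  | .exq x φ => freeS φ \ {x}
  | .bind _ x ψ => freeP ψ ∪ {x}
  | .unbind _ x ψ => freeP ψ ∪ {x}
/-- Free variables of a path formula. -/
def freeP : PathForm Ag At X → Set X
  | .ofState φ => freeS φ
  | .pnot ψ => freeP ψ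
  | .pand ψ₁ ψ₂ => freeP ψ₁ ∪ freeP ψ₂
  | .puntil ψ₁ ψ₂ => freeP ψ₁ ∪ freeP ψ₂
  | .pnext ψ => freeP ψ
end

/-- A sentence: a formula with no free variable. -/
def StateForm.IsSentence (φ : StateForm Ag At X) : Prop := freeS φ = ∅

mutual
/-- SL formulas: USL formulas with no unbinder whose binders bind single agents. -/
def IsSLS : StateForm Ag At X → Prop
  | .atom _ => True
  | .snot φ => IsSLS φ
  | .sand φ₁ φ₂ => IsSLS φ₁ ∧ IsSLS φ₂
  | .exq _ φ => IsSLS φ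
  | .bind A _ ψ => (∃ a : Ag, A = {a}) ∧ IsSLP ψ
  | .unbind _ _ _ => False
def IsSLP : PathForm Ag At X → Prop
  | .ofState φ => IsSLS φ
  | .pnot ψ => IsSLP ψ
  | .pand ψ₁ ψ₂ => IsSLP ψ₁ ∧ IsSLP ψ₂
  | .puntil ψ₁ ψ₂ => IsSLP ψ₁ ∧ IsSLP ψ₂
  | .pnext ψ => IsSLP ψ
end

/-- The commitment κ* used by the generalized SL binder: every pair (A, y) is replaced
    by (A, x); if there is no such pair, (A, x) is appended as the most recent binding. -/
noncomputable def slRebind (A : Set Ag) (x : X) (κ : Commitment Ag X) : Commitment Ag X :=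
  if ∃ e ∈ κ, e.1 = A then κ.map (fun e => if e.1 = A then (A, x) else e) else (A, x) :: κ

mutual
/-- Generalized SL satisfaction over NATS, state formulas: as USL except the binder
    clause, where binding revokes the agent's previously bound strategies. -/
def SatSLS (M : NATS Ag St At) (μ : M.Assignment X) (κ : Commitment Ag X) (s : St) :
    StateForm Ag At X → Prop
  | .atom p => p ∈ M.v s
  | .snot φ => ¬ SatSLS M μ κ s φ
  | .sand φ₁ φ₂ => SatSLS M μ κ s φ₁ ∧ SatSLS M μ κ s φ₂
  | .exq x φ => ∃ σ : M.Strategy, SatSLS M (Function.update μ x (some σ)) κ s φ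
  | .bind A x ψ =>
      ∀ lam ∈ outcomes M μ (slRebind A x κ) s, SatSLP M μ (slRebind A x κ) lam ψ
  | .unbind A x ψ =>
      ∀ lam ∈ outcomes M μ (unbindCom A x κ) s, SatSLP M μ (unbindCom A x κ) lam ψ
/-- Generalized SL satisfaction over NATS, path formulas. -/
def SatSLP (M : NATS Ag St At) (μ : M.Assignment X) (κ : Commitment Ag X) (lam : ℕ → St) :
    PathForm Ag At X → Prop
  | .ofState φ => SatSLS M μ κ (lam 0) φ
  | .pnot ψ => ¬ SatSLP M μ κ lam ψ
  | .pand ψ₁ ψ₂ => SatSLP M μ κ lam ψ₁ ∧ SatSLP M μ κ lam ψ₂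
  | .puntil ψ₁ ψ₂ => ∃ i : ℕ,
      SatSLP M (μ.shift (histOf lam i)) κ (fun n => lam (n + i)) ψ₂ ∧
      ∀ j < i, SatSLP M (μ.shift (histOf lam j)) κ (fun n => lam (n + j)) ψ₁
  | .pnext ψ => SatSLP M (μ.shift [lam 0]) κ (fun n => lam (n + 1)) ψ
end

/-- Truth of an SL sentence at a state under the generalized SL semantics. -/
def SLTrue (M : NATS Ag St At) (s : St) (φ : StateForm Ag At X) : Prop :=
  SatSLS M (emptyAsg M X) [] s φ

/-- A NATS is deterministic if any selection of one choice per agent intersects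
    in a singleton. -/
def NATS.Deterministic (M : NATS Ag St At) : Prop :=
  ∀ (s : St) (c : Ag → Set St), (∀ a, c a ∈ M.Ch a s) → ∃ t : St, (⋂ a, c a) = {t}
/-- The tautology ⊤ (built from the atom p by state-level connectives). -/
def pTop (p : At) : PathForm Ag At X :=
  .ofState (.snot (.sand (.atom p) (.snot (.atom p))))

/-- □ψ abbreviates ¬(⊤ U ¬ψ). -/
def Box (p : At) (ψ : PathForm Ag At X) : PathForm Ag At X :=
  .pnot (.puntil (pTop p) (.pnot ψ))

/-- ψ9 := ⟨⟨x⟩⟩(a,x)□(⟨⟨x₀⟩⟩(a,x₀)∘p ∧ ⟨⟨x₀⟩⟩(a,x₀)∘¬p). -/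
def psi9 (a : Ag) (p : At) (x x₀ : X) : StateForm Ag At X :=
  .exq x (.bind {a} x (Box p (.pand
    (.ofState (.exq x₀ (.bind {a} x₀ (.pnext (.ofState (.atom p))))))
    (.ofState (.exq x₀ (.bind {a} x₀ (.pnext (.pnot (.ofState (.atom p))))))))))

/-- ψ7 = ψ8 := ⟨⟨x₁⟩⟩(a,x₁)□⟨⟨x₂⟩⟩(a,x₂)∘p. -/
def psi78 (a : Ag) (p : At) (x₁ x₂ : X) : StateForm Ag At X :=
  .exq x₁ (.bind {a} x₁ (Box p
    (.ofState (.exq x₂ (.bind {a} x₂ (.pnext (.ofState (.atom p))))))))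

mutual
/-- Polarity check: `pol = true` means positive polarity; every ⟨⟨x⟩⟩ must
    occur positively. -/
def ExS (pol : Bool) : StateForm Ag At X → Prop
  | .atom _ => True
  | .snot φ => ExS (!pol) φ
  | .sand φ₁ φ₂ => ExS pol φ₁ ∧ ExS pol φ₂
  | .exq _ φ => pol = true ∧ ExS pol φ
  | .bind _ _ ψ => ExP pol ψ
  | .unbind _ _ ψ => ExP pol ψ
def ExP (pol : Bool) : PathForm Ag At X → Prop
  | .ofState φ => ExS pol φ
  | .pnot ψ => ExP (!pol) ψ
  | .pand ψ₁ ψ₂ => ExP pol ψ₁ ∧ ExP pol ψ₂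
  | .puntil ψ₁ ψ₂ => ExP pol ψ₁ ∧ ExP pol ψ₂
  | .pnext ψ => ExP pol ψ
end

/-- An existential SL formula: every occurrence of ⟨⟨x⟩⟩ occurs positively. -/
def Existential (φ : StateForm Ag At X) : Prop := ExS true φ

/-- The structure M1. -/
noncomputable def M1 : NATS Unit (Fin 3) Unit where
  v := fun s => {_u : Unit | s = 1}
  Ch := fun _ s => if s = 0 then {{0}, {1}} else {{2}}
  Ch_nonempty := by
    intro a s
    try dsimp only
    split
    · exact ⟨{0}, by simp⟩
    · exact ⟨{2}, by simp⟩
  Ch_inter := by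
    intro a₁ a₂ h
    exact absurd (Subsingleton.elim a₁ a₂) h

/-- The structure M2. -/
noncomputable def M2 : NATS Unit (Fin 3) Unit where
  v := fun s => {_u : Unit | s = 1}
  Ch := fun _ s =>
    if s = 0 then {{0, 1}, {1}, {0}} else if s = 1 then {{0, 1}, {1}, {0, 2}} else {{2}}
  Ch_nonempty := by
    intro a s
    try dsimp only
    split
    · exact ⟨{0, 1}, by simp⟩
    · split
      · exact ⟨{0, 1}, by simp⟩
      · exact ⟨{2}, by simp⟩
  Ch_inter := by
    intro a₁ a₂ h
    exact absurd (Subsingleton.elim a₁ a₂) h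

/-- The binary-tree NATS T_L over {0,1}*, with p true exactly on L. -/
def treeNATS (L : Set (List Bool)) : NATS Unit (List Bool) Unit where
  v := fun w => {_u : Unit | w ∈ L}
  Ch := fun _ w => {{w ++ [false]}, {w ++ [true]}}
  Ch_nonempty := fun _ w => ⟨{w ++ [false]}, by simp⟩
  Ch_inter := by
    intro a₁ a₂ h
    exact absurd (Subsingleton.elim a₁ a₂) h
/-- First-order formulas over the signature (S₀, S₁, P, X₁, …, X_n) of binary trees,
    with n unary second-order variables; first-order variables are indexed by ℕ. -/
inductive FO (n : ℕ) : Type where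
  | eq (i j : ℕ)
  | s0 (i j : ℕ)
  | s1 (i j : ℕ)
  | pre (i : ℕ)
  | svar (k : Fin n) (i : ℕ)
  | fnot (θ : FO n)
  | fand (θ₁ θ₂ : FO n)
  | fex (i : ℕ) (θ : FO n)

/-- Satisfaction of a first-order formula in the binary tree ({0,1}*, S₀, S₁, L),
    with second-order parameters Xs and first-order valuation val. -/
noncomputable def FO.Sat {n : ℕ} (L : Set (List Bool)) (Xs : Fin n → Set (List Bool))
    (val : ℕ → List Bool) : FO n → Prop
  | .eq i j => val i = val j
  | .s0 i j => val j = val i ++ [false]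
  | .s1 i j => val j = val i ++ [true]
  | .pre i => val i ∈ L
  | .svar k i => val i ∈ Xs k
  | .fnot θ => ¬ FO.Sat L Xs val θ
  | .fand θ₁ θ₂ => FO.Sat L Xs val θ₁ ∧ FO.Sat L Xs val θ₂
  | .fex i θ => ∃ w : List Bool, FO.Sat L Xs (Function.update val i w) θ

/-- Free first-order variables of a first-order formula. -/
def FO.free {n : ℕ} : FO n → Set ℕ
  | .eq i j => {i, j}
  | .s0 i j => {i, j}
  | .s1 i j => {i, j}
  | .pre i => {i}
  | .svar _ i => {i}
  | .fnot θ => θ.free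
  | .fand θ₁ θ₂ => θ₁.free ∪ θ₂.free
  | .fex i θ => θ.free \ {i}

/-- Satisfaction of the Σ¹₁ sentence ∃X₁…∃X_n θ in the binary tree determined by L. -/
noncomputable def Sigma11Sat (L : Set (List Bool)) (n : ℕ) (θ : FO n) : Prop :=
  ∃ Xs : Fin n → Set (List Bool), FO.Sat L Xs (fun _ => []) θ

/-- unbind(A, y₁) … unbind(A, y_k) ψ for the list l = [y₁, …, y_k]. -/
def unbindSeq (A : Set Ag) (l : List X) (ψ : PathForm Ag At X) : PathForm Ag At X :=
  l.foldr (fun y ψ' => .ofState (.unbind A y ψ')) ψ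

mutual
/-- Translation of SL formulas into USL: each binder (A, x) is replaced by the
    sequence of unbinders of A from every variable in the list l, followed by (A, x). -/
def tS (l : List X) : StateForm Ag At X → StateForm Ag At X
  | .atom p => .atom p
  | .snot φ => .snot (tS l φ)
  | .sand φ₁ φ₂ => .sand (tS l φ₁) (tS l φ₂)
  | .exq x φ => .exq x (tS l φ)
  | .bind A x ψ =>
      match l with
      | [] => .bind A x (tP l ψ)
      | y :: ys => .unbind A y (unbindSeq A ys (.ofState (.bind A x (tP l ψ))))
  | .unbind A x ψ => .unbind A x (tP l ψ)
def tP (l : List X) : PathForm Ag At X → PathForm Ag At X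
  | .ofState φ => .ofState (tS l φ)
  | .pnot ψ => .pnot (tP l ψ)
  | .pand ψ₁ ψ₂ => .pand (tP l ψ₁) (tP l ψ₂)
  | .puntil ψ₁ ψ₂ => .puntil (tP l ψ₁) (tP l ψ₂)
  | .pnext ψ => .pnext (tP l ψ)
end
mutual
/-- Substitution replacing every occurrence of the subformula p by p ∧ G and every
    occurrence of ¬p by ¬p ∧ G. -/
def gsubS (G : PathForm Ag At X) : StateForm Ag At X → StateForm Ag At X
  | .atom q => .atom q
  | .snot φ => .snot (gsubS G φ)
  | .sand φ₁ φ₂ => .sand (gsubS G φ₁) (gsubS G φ₂)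
  | .exq x φ => .exq x (gsubS G φ)
  | .bind A x ψ => .bind A x (gsubP G ψ)
  | .unbind A x ψ => .unbind A x (gsubP G ψ)
def gsubP (G : PathForm Ag At X) : PathForm Ag At X → PathForm Ag At X
  | .ofState (.atom q) => .pand (.ofState (.atom q)) G
  | .pnot (.ofState (.atom q)) => .pand (.pnot (.ofState (.atom q))) G
  | .ofState φ => .ofState (gsubS G φ)
  | .pnot ψ => .pnot (gsubP G ψ)
  | .pand ψ₁ ψ₂ => .pand (gsubP G ψ₁) (gsubP G ψ₂)
  | .puntil ψ₁ ψ₂ => .puntil (gsubP G ψ₁) (gsubP G ψ₂)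
  | .pnext ψ => .pnext (gsubP G ψ)
end

/-- The guard formula □(⟨⟨v⟩⟩(a,v)∘p ∧ ⟨⟨v⟩⟩(a,v)∘¬p) over the single agent and atom. -/
def guardForm (v : ℕ) : PathForm Unit Unit ℕ :=
  Box () (.pand
    (.ofState (.exq v (.bind {()} v (.pnext (.ofState (.atom ()))))))
    (.ofState (.exq v (.bind {()} v (.pnext (.pnot (.ofState (.atom ()))))))))

/-- The family Γ_i of SL sentences (variable x is coded by 0 and x_i by i + 1). -/
def Gamma : ℕ → StateForm Unit Unit ℕ
  | 0 => psi9 () () 0 1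
  | i + 1 => gsubS (guardForm (i + 2)) (Gamma i)
/-- A concurrent game structure (labeling and transition function). -/
structure CGS (Ag St At Ac : Type) where
  v : St → Set At
  tr : St → (Ag → Ac) → St

/-- SL formulas (over CGS), as in Mogavero–Murano–Vardi. -/
inductive SLForm (Ag At X : Type) : Type where
  | atom (p : At)
  | fnot (φ : SLForm Ag At X)
  | fand (φ₁ φ₂ : SLForm Ag At X)
  | fnext (φ : SLForm Ag At X)
  | funtil (φ₁ φ₂ : SLForm Ag At X)
  | exq (x : X) (φ : SLForm Ag At X)
  | allq (x : X) (φ : SLForm Ag At X)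
  | bind (a : Ag) (x : X) (φ : SLForm Ag At X)

/-- A CGS strategy: a function from tracks (history, current state) to actions. -/
def CGSStrat (St Ac : Type) : Type := List St → St → Ac

/-- Translation of a CGS strategy by a track prefix. -/
def CGSStrat.shift (σ : CGSStrat St Ac) (τ : List St) : CGSStrat St Ac :=
  fun h s => σ (τ ++ h) s

/-- Auxiliary: (current state, history) of the unique play determined by one
    strategy per agent. -/
def playAux {Ac : Type} (G : CGS Ag St At Ac) (α : Ag → CGSStrat St Ac) (s : St) :
    ℕ → St × List St
  | 0 => (s, [])
  | n + 1 =>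
      let q := playAux G α s n
      (G.tr q.1 (fun a => α a q.2 q.1), q.2 ++ [q.1])

/-- The unique play determined by the strategies assigned to all agents. -/
def play {Ac : Type} (G : CGS Ag St At Ac) (α : Ag → CGSStrat St Ac) (s : St) (n : ℕ) : St :=
  (playAux G α s n).1

/-- SL satisfaction over a CGS, with a partial assignment χ of strategies to
    variables and a (total) assignment α of strategies to agents. -/
noncomputable def SLSatCGS {Ac : Type} (G : CGS Ag St At Ac) :
    (X → Option (CGSStrat St Ac)) → (Ag → CGSStrat St Ac) → St → SLForm Ag At X → Prop
  | _, _, s, .atom p => p ∈ G.v s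
  | χ, α, s, .fnot φ => ¬ SLSatCGS G χ α s φ
  | χ, α, s, .fand φ₁ φ₂ => SLSatCGS G χ α s φ₁ ∧ SLSatCGS G χ α s φ₂
  | χ, α, s, .exq x φ => ∃ σ : CGSStrat St Ac, SLSatCGS G (Function.update χ x (some σ)) α s φ
  | χ, α, s, .allq x φ => ∀ σ : CGSStrat St Ac, SLSatCGS G (Function.update χ x (some σ)) α s φ
  | χ, α, s, .bind a x φ => SLSatCGS G χ (Function.update α a ((χ x).getD (α a))) s φ
  | χ, α, s, .fnext φ =>
      SLSatCGS G (fun y => (χ y).map (fun σ => σ.shift [s])) (fun b => (α b).shift [s])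
        (play G α s 1) φ
  | χ, α, s, .funtil φ₁ φ₂ => ∃ i : ℕ,
      SLSatCGS G (fun y => (χ y).map (fun σ => σ.shift ((List.range i).map (play G α s))))
        (fun b => (α b).shift ((List.range i).map (play G α s))) (play G α s i) φ₂ ∧
      ∀ j < i,
        SLSatCGS G (fun y => (χ y).map (fun σ => σ.shift ((List.range j).map (play G α s))))
          (fun b => (α b).shift ((List.range j).map (play G α s))) (play G α s j) φ₁

/-- Free agents of an SL formula (temporal operators free all agents; a binder
    (a, x) binds agent a). -/
def SLForm.freeAg : SLForm Ag At X → Set Ag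
  | .atom _ => ∅
  | .fnot φ => φ.freeAg
  | .fand φ₁ φ₂ => φ₁.freeAg ∪ φ₂.freeAg
  | .fnext _ => Set.univ
  | .funtil _ _ => Set.univ
  | .exq _ φ => φ.freeAg
  | .allq _ φ => φ.freeAg
  | .bind a _ φ => φ.freeAg \ {a}

/-- Free variables of an SL formula. -/
noncomputable def SLForm.freeVr : SLForm Ag At X → Set X
  | .atom _ => ∅
  | .fnot φ => φ.freeVr
  | .fand φ₁ φ₂ => φ₁.freeVr ∪ φ₂.freeVr
  | .fnext φ => φ.freeVr
  | .funtil φ₁ φ₂ => φ₁.freeVr ∪ φ₂.freeVr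
  | .exq x φ => φ.freeVr \ {x}
  | .allq x φ => φ.freeVr \ {x}
  | .bind a x φ => if a ∈ φ.freeAg then φ.freeVr ∪ {x} else φ.freeVr

/-- An SL sentence: no free agent and no free variable. -/
def SLForm.IsSentence (φ : SLForm Ag At X) : Prop := φ.freeAg = ∅ ∧ φ.freeVr = ∅

/-- Truth of an SL sentence at a state of a CGS: with the empty assignment of
    variables (and any assignment of agents, which is irrelevant for sentences). -/
noncomputable def SLTrueCGS {Ac : Type} (G : CGS Ag St At Ac) (s : St)
    (φ : SLForm Ag At X) : Prop :=
  ∀ α : Ag → CGSStrat St Ac, SLSatCGS G (fun _ => none) α s φ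


/-! ### Auxiliary development for Statement 3 -/

section NoGo

/-- The "good" model: every choice contains exactly one p-state and one ¬p-state. -/
def Gd : NATS Unit (Bool × Bool) Unit where
  v := fun s => {_u : Unit | s.1 = true}
  Ch := fun _ _ => {c | ∃ i j : Bool, c = {(true, i), (false, j)}}
  Ch_nonempty := fun _ _ => ⟨{(true, true), (false, true)}, ⟨true, true, rfl⟩⟩
  Ch_inter := fun a₁ a₂ h => absurd (Subsingleton.elim a₁ a₂) h

/-- The "bad" model: a single choice `univ` everywhere. -/
def Bd : NATS Unit Bool Unit where
  v := fun s => {_u : Unit | s = true}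
  Ch := fun _ _ => {Set.univ}
  Ch_nonempty := fun _ _ => ⟨Set.univ, rfl⟩
  Ch_inter := fun a₁ a₂ h => absurd (Subsingleton.elim a₁ a₂) h

lemma Bd_f (σ : Bd.Strategy) (a : Unit) (h : List Bool) (s : Bool) :
    σ.f a h s = Set.univ := by
  have := σ.valid a h s
  simpa [Bd] using this

lemma Gd_f (σ : Gd.Strategy) (a : Unit) (h : List (Bool × Bool)) (s : Bool × Bool) :
    ∃ i j : Bool, σ.f a h s = {(true, i), (false, j)} := by
  have := σ.valid a h s
  simpa [Gd] using this

/-- Basic unfolding lemmas for `ctxFun`. -/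
lemma ctxFun_nil {M : NATS Ag St At} (μ : M.Assignment X) (h : List St) (s : St) :
    ctxFun μ [] h s = Set.univ := rfl

lemma ctxFun_cons {M : NATS Ag St At} (μ : M.Assignment X) (A : Set Ag) (x : X)
    (κ : Commitment Ag X) (h : List St) (s : St) :
    ctxFun μ ((A, x) :: κ) h s =
      if (ctxFun μ κ h s ∩ bindChoice μ A x h s).Nonempty
      then ctxFun μ κ h s ∩ bindChoice μ A x h s else ctxFun μ κ h s := rfl

lemma bindChoice_none {M : NATS Ag St At} (μ : M.Assignment X) (A : Set Ag) (x : X)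
    (hx : μ x = none) (h : List St) (s : St) : bindChoice μ A x h s = Set.univ := by
  unfold bindChoice; rw [hx]

lemma bindChoice_some {M : NATS Unit St At} (μ : M.Assignment X) (x : X) (σ : M.Strategy)
    (hx : μ x = some σ) (h : List St) (s : St) :
    bindChoice μ ({()} : Set Unit) x h s = σ.f () h s := by
  unfold bindChoice
  rw [hx]
  show (if ({()} : Set Unit).Nonempty then ⋂ a ∈ ({()} : Set Unit), σ.f a h s else Set.univ)
      = σ.f () h s
  rw [if_pos (Set.singleton_nonempty ())]
  exact Set.biInter_singleton () _

lemma bindChoice_Bd (μ : Bd.Assignment X) (A : Set Unit) (x : X) (h : List Bool) (s : Bool) :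
    bindChoice μ A x h s = Set.univ := by
  cases hx : μ x with
  | none => exact bindChoice_none μ A x hx h s
  | some σ =>
    unfold bindChoice
    rw [hx]
    show (if A.Nonempty then ⋂ a ∈ A, σ.f a h s else Set.univ) = Set.univ
    split
    · apply Set.eq_univ_of_forall
      intro t
      simp [Set.mem_iInter, Bd_f]
    · rfl

lemma ctxFun_Bd (μ : Bd.Assignment X) (κ : Commitment Unit X) (h : List Bool) (s : Bool) :
    ctxFun μ κ h s = Set.univ := by
  induction κ with
  | nil => rfl
  | cons e κ ih =>
    obtain ⟨A, x⟩ := e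
    rw [ctxFun_cons, ih, bindChoice_Bd]
    simp

lemma step_Bd (s s' : Bool) : Bd.Step s s' := fun _ => ⟨Set.univ, rfl, trivial⟩

lemma step_Gd (s s' : Bool × Bool) : Gd.Step s s' := by
  intro _
  refine ⟨{(true, s'.2), (false, s'.2)}, ⟨s'.2, s'.2, rfl⟩, ?_⟩
  obtain ⟨v, i⟩ := s'
  cases v
  · exact Or.inr rfl
  · exact Or.inl rfl

lemma mem_outcomes_Bd (μ : Bd.Assignment X) (κ : Commitment Unit X) (s : Bool)
    (lam : ℕ → Bool) (h0 : lam 0 = s) : lam ∈ outcomes Bd μ κ s := by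
  refine ⟨fun n => step_Bd _ _, h0, fun n => ?_⟩
  rw [ctxFun_Bd]
  trivial

/-- Commitments reachable in the SL semantics over a single agent:
empty, or a nonempty constant list of the same binding. -/
def GoodK (κ : Commitment Unit X) : Prop :=
  κ = [] ∨ ∃ (x : X) (n : ℕ), κ = List.replicate (n + 1) (({()} : Set Unit), x)

lemma goodK_nil : GoodK ([] : Commitment Unit X) := Or.inl rfl

lemma goodK_slRebind (x : X) {κ : Commitment Unit X} (h : GoodK κ) :
    GoodK (slRebind ({()} : Set Unit) x κ) := by
  rcases h with rfl | ⟨y, n, rfl⟩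
  · right
    refine ⟨x, 0, ?_⟩
    unfold slRebind
    rw [if_neg]
    · rfl
    · rintro ⟨e, he, -⟩
      exact absurd he List.not_mem_nil
  · right
    refine ⟨x, n, ?_⟩
    unfold slRebind
    rw [if_pos]
    · rw [List.map_replicate]
      simp
    · exact ⟨(({()} : Set Unit), y), List.mem_replicate.2 ⟨Nat.succ_ne_zero n, rfl⟩, rfl⟩

lemma bindChoice_Gd_bicolor (μ : Gd.Assignment X) (x : X) (h : List (Bool × Bool))
    (s : Bool × Bool) :
    bindChoice μ ({()} : Set Unit) x h s = Set.univ ∨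
      ∃ i j : Bool, bindChoice μ ({()} : Set Unit) x h s = {(true, i), (false, j)} := by
  cases hx : μ x with
  | none => exact Or.inl (bindChoice_none μ _ x hx h s)
  | some σ =>
    right
    rw [bindChoice_some μ x σ hx h s]
    exact Gd_f σ () h s

lemma bindChoice_Gd_nonempty (μ : Gd.Assignment X) (x : X) (h : List (Bool × Bool))
    (s : Bool × Bool) : (bindChoice μ ({()} : Set Unit) x h s).Nonempty := by
  rcases bindChoice_Gd_bicolor μ x h s with he | ⟨i, j, he⟩ <;> rw [he]
  · exact Set.univ_nonempty
  · exact ⟨(true, i), Or.inl rfl⟩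

lemma ctx_replicate (μ : Gd.Assignment X) (x : X) (n : ℕ) (h : List (Bool × Bool))
    (s : Bool × Bool) :
    ctxFun μ (List.replicate (n + 1) (({()} : Set Unit), x)) h s =
      bindChoice μ ({()} : Set Unit) x h s := by
  induction n with
  | zero =>
    rw [List.replicate_one, ctxFun_cons, ctxFun_nil, Set.univ_inter,
      if_pos (bindChoice_Gd_nonempty μ x h s)]
  | succ n ih =>
    rw [List.replicate_succ, ctxFun_cons, ih, Set.inter_self,
      if_pos (bindChoice_Gd_nonempty μ x h s)]

lemma ctx_bicolor {κ : Commitment Unit X} (hκ : GoodK κ) (μ : Gd.Assignment X)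
    (h : List (Bool × Bool)) (s : Bool × Bool) :
    ∃ u w : Bool × Bool, u ∈ ctxFun μ κ h s ∧ w ∈ ctxFun μ κ h s ∧
      u.1 = true ∧ w.1 = false := by
  rcases hκ with rfl | ⟨x, n, rfl⟩
  · exact ⟨(true, true), (false, false), trivial, trivial, rfl, rfl⟩
  · rw [ctx_replicate]
    rcases bindChoice_Gd_bicolor μ x h s with he | ⟨i, j, he⟩ <;> rw [he]
    · exact ⟨(true, true), (false, false), trivial, trivial, rfl, rfl⟩
    · exact ⟨(true, i), (false, j), Or.inl rfl, Or.inr rfl, rfl, rfl⟩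

lemma histOf_succ (lam : ℕ → St) (n : ℕ) :
    histOf lam (n + 1) = histOf lam n ++ [lam n] := by
  simp [histOf, List.range_succ]

/-- Lifting of a path of `Bd` to an outcome of `Gd`. -/
lemma lift_exists {κ : Commitment Unit X} (hκ : GoodK κ) (μ : Gd.Assignment X)
    (s : Bool × Bool) (lB : ℕ → Bool) (h0 : lB 0 = s.1) :
    ∃ lG : ℕ → Bool × Bool, lG ∈ outcomes Gd μ κ s ∧ ∀ n, (lG n).1 = lB n := by
  have pick : ∀ (h : List (Bool × Bool)) (t : Bool × Bool) (b : Bool),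
      ∃ u, u ∈ ctxFun μ κ h t ∧ u.1 = b := by
    intro h t b
    obtain ⟨u, w, hu, hw, hu1, hw1⟩ := ctx_bicolor hκ μ h t
    cases b
    · exact ⟨w, hw, hw1⟩
    · exact ⟨u, hu, hu1⟩
  choose f hf hf1 using pick
  let q : ℕ → List (Bool × Bool) × (Bool × Bool) := fun n =>
    Nat.rec (([], s)) (fun n p => (p.1 ++ [p.2], f p.1 p.2 (lB (n + 1)))) n
  have hq : ∀ n, q (n + 1) = ((q n).1 ++ [(q n).2], f (q n).1 (q n).2 (lB (n + 1))) :=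
    fun n => rfl
  refine ⟨fun n => (q n).2, ⟨fun n => step_Gd _ _, rfl, ?_⟩, ?_⟩
  · have hhist : ∀ n, (q n).1 = histOf (fun m => (q m).2) n := by
      intro n
      induction n with
      | zero => rfl
      | succ n ih => rw [hq, histOf_succ, ← ih]
    intro n
    have hmem : (q (n + 1)).2 ∈ ctxFun μ κ (q n).1 (q n).2 := by
      rw [hq]; exact hf _ _ _
    rw [hhist n] at hmem
    exact hmem
  · intro n
    cases n with
    | zero => exact h0.symm
    | succ n =>
      show (q (n + 1)).2.1 = lB (n + 1)
      rw [hq]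
      exact hf1 _ _ _

/-- The unique strategy of `Bd`. -/
def bStrat : Bd.Strategy := ⟨fun _ _ _ => Set.univ, fun _ _ _ => rfl⟩

/-- The constant strategy of `Gd` with choice `{(true,i),(false,j)}`. -/
def gPair (i j : Bool) : Gd.Strategy :=
  ⟨fun _ _ _ => {(true, i), (false, j)}, fun _ _ _ => ⟨i, j, rfl⟩⟩

/-- The correspondence of assignments: defined on the same variables. -/
def Rel (μG : Gd.Assignment X) (μB : Bd.Assignment X) : Prop :=
  ∀ x, μG x = none ↔ μB x = none

lemma Rel.update {μG : Gd.Assignment X} {μB : Bd.Assignment X} (h : Rel μG μB) (x : X)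
    (σ : Gd.Strategy) (τ : Bd.Strategy) :
    Rel (Function.update μG x (some σ)) (Function.update μB x (some τ)) := by
  intro y
  by_cases hy : y = x
  · subst hy; unfold Function.update; simp
  · unfold Function.update; simpa [hy] using h y

lemma Rel.shift {μG : Gd.Assignment X} {μB : Bd.Assignment X} (h : Rel μG μB)
    (hG : List (Bool × Bool)) (hB : List Bool) :
    Rel (μG.shift hG) (μB.shift hB) := by
  intro y
  unfold NATS.Assignment.shift
  rw [Option.map_eq_none_iff, Option.map_eq_none_iff]
  exact h y

end NoGo


mutual
/-- Generalized-SL satisfaction cannot distinguish `Gd` from `Bd`. -/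
theorem satS_iff : ∀ (φ : StateForm Unit Unit X), IsSLS φ →
    ∀ (μG : Gd.Assignment X) (μB : Bd.Assignment X), Rel μG μB →
    ∀ (κ : Commitment Unit X), GoodK κ → ∀ s : Bool × Bool,
    (SatSLS Gd μG κ s φ ↔ SatSLS Bd μB κ s.1 φ)
  | .atom p, _, μG, μB, hr, κ, hκ, s => by
      simp only [SatSLS]
      exact Iff.rfl
  | .snot φ, hφ, μG, μB, hr, κ, hκ, s => by
      simp only [SatSLS]
      exact not_congr (satS_iff φ hφ μG μB hr κ hκ s)
  | .sand φ₁ φ₂, hφ, μG, μB, hr, κ, hκ, s => by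
      simp only [SatSLS]
      exact and_congr (satS_iff φ₁ hφ.1 μG μB hr κ hκ s)
        (satS_iff φ₂ hφ.2 μG μB hr κ hκ s)
  | .exq x φ, hφ, μG, μB, hr, κ, hκ, s => by
      simp only [SatSLS]
      constructor
      · rintro ⟨σ, h⟩
        exact ⟨bStrat, (satS_iff φ hφ _ _ (hr.update x σ bStrat) κ hκ s).mp h⟩
      · rintro ⟨τ, h⟩
        exact ⟨gPair true true,
          (satS_iff φ hφ _ _ (hr.update x (gPair true true) τ) κ hκ s).mpr h⟩
  | .bind A x ψ, hφ, μG, μB, hr, κ, hκ, s => by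
      obtain ⟨⟨a, rfl⟩, hψ⟩ := hφ
      cases a
      simp only [SatSLS]
      have hκ' := goodK_slRebind x hκ
      constructor
      · intro hG lB hlB
        obtain ⟨lG, hmem, hproj⟩ := lift_exists hκ' μG s lB hlB.2.1
        exact (satP_iff ψ hψ μG μB hr _ hκ' lG lB hproj).mp (hG lG hmem)
      · intro hB lG hlG
        have hBmem : (fun n => (lG n).1) ∈ outcomes Bd μB (slRebind {()} x κ) s.1 := by
          apply mem_outcomes_Bd
          show (lG 0).1 = s.1
          rw [hlG.2.1]
        exact (satP_iff ψ hψ μG μB hr _ hκ' lG _ (fun n => rfl)).mpr (hB _ hBmem)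
  | .unbind A x ψ, hφ, μG, μB, hr, κ, hκ, s => hφ.elim

theorem satP_iff : ∀ (ψ : PathForm Unit Unit X), IsSLP ψ →
    ∀ (μG : Gd.Assignment X) (μB : Bd.Assignment X), Rel μG μB →
    ∀ (κ : Commitment Unit X), GoodK κ →
    ∀ (lG : ℕ → Bool × Bool) (lB : ℕ → Bool), (∀ n, (lG n).1 = lB n) →
    (SatSLP Gd μG κ lG ψ ↔ SatSLP Bd μB κ lB ψ)
  | .ofState φ, hψ, μG, μB, hr, κ, hκ, lG, lB, hl => by
      simp only [SatSLP]
      have h := satS_iff φ hψ μG μB hr κ hκ (lG 0)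
      rwa [hl 0] at h
  | .pnot ψ, hψ, μG, μB, hr, κ, hκ, lG, lB, hl => by
      simp only [SatSLP]
      exact not_congr (satP_iff ψ hψ μG μB hr κ hκ lG lB hl)
  | .pand ψ₁ ψ₂, hψ, μG, μB, hr, κ, hκ, lG, lB, hl => by
      simp only [SatSLP]
      exact and_congr (satP_iff ψ₁ hψ.1 μG μB hr κ hκ lG lB hl)
        (satP_iff ψ₂ hψ.2 μG μB hr κ hκ lG lB hl)
  | .puntil ψ₁ ψ₂, hψ, μG, μB, hr, κ, hκ, lG, lB, hl => by
      simp only [SatSLP]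
      apply exists_congr; intro i
      apply and_congr
      · exact satP_iff ψ₂ hψ.2 _ _ (hr.shift _ _) κ hκ _ _ (fun n => hl (n + i))
      · exact forall₂_congr fun j _ =>
          satP_iff ψ₁ hψ.1 _ _ (hr.shift _ _) κ hκ _ _ (fun n => hl (n + j))
  | .pnext ψ, hψ, μG, μB, hr, κ, hκ, lG, lB, hl => by
      simp only [SatSLP]
      exact satP_iff ψ hψ _ _ (hr.shift _ _) κ hκ _ _ (fun n => hl (n + 1))
end


lemma Gd_f_nonempty (σ : Gd.Strategy) (a : Unit) (h : List (Bool × Bool)) (s : Bool × Bool) :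
    (σ.f a h s).Nonempty := by
  obtain ⟨i, j, he⟩ := Gd_f σ a h s
  rw [he]
  exact ⟨(true, i), Or.inl rfl⟩

lemma ctx1_eval (μ : Gd.Assignment Bool) (σ : Gd.Strategy) (h1 : μ true = some σ)
    (h : List (Bool × Bool)) (s : Bool × Bool) :
    ctxFun μ [(({()} : Set Unit), true)] h s = σ.f () h s := by
  rw [ctxFun_cons, ctxFun_nil, bindChoice_some μ true σ h1, Set.univ_inter,
    if_pos (Gd_f_nonempty σ () h s)]

lemma ctx2_eval (μ : Gd.Assignment Bool) (σ τ : Gd.Strategy)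
    (h1 : μ true = some σ) (h2 : μ false = some τ)
    (h : List (Bool × Bool)) (s : Bool × Bool) :
    ctxFun μ [(({()} : Set Unit), false), (({()} : Set Unit), true)] h s =
      if (σ.f () h s ∩ τ.f () h s).Nonempty then σ.f () h s ∩ τ.f () h s
      else σ.f () h s := by
  rw [ctxFun_cons, ctx1_eval μ σ h1, bindChoice_some μ false τ h2]

lemma DCp : (({(true, true), (false, false)} : Set (Bool × Bool)) ∩
    ({(true, true), (false, true)} : Set (Bool × Bool))) = {(true, true)} := by
  ext x
  simp only [Set.mem_inter_iff, Set.mem_insert_iff, Set.mem_singleton_iff]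
  constructor
  · rintro ⟨rfl | rfl, h2⟩ <;> simp_all
  · rintro rfl; exact ⟨Or.inl rfl, Or.inl rfl⟩

lemma DCn : (({(true, true), (false, false)} : Set (Bool × Bool)) ∩
    ({(true, false), (false, false)} : Set (Bool × Bool))) = {(false, false)} := by
  ext x
  simp only [Set.mem_inter_iff, Set.mem_insert_iff, Set.mem_singleton_iff]
  constructor
  · rintro ⟨rfl | rfl, h2⟩ <;> simp_all
  · rintro rfl; exact ⟨Or.inr rfl, Or.inr rfl⟩

/-- Instance-agnostic evaluation of `Function.update` on `Bool`. -/
lemma upd_tt {β : Type} {D : DecidableEq Bool} (f : Bool → β) (v : β) :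
    @Function.update Bool (fun _ => β) D f true v true = v := by
  unfold Function.update; simp

lemma upd_tf {β : Type} {D : DecidableEq Bool} (f : Bool → β) (v : β) :
    @Function.update Bool (fun _ => β) D f false v true = f true := by
  unfold Function.update; simp

lemma upd_ff {β : Type} {D : DecidableEq Bool} (f : Bool → β) (v : β) :
    @Function.update Bool (fun _ => β) D f false v false = v := by
  unfold Function.update; simp

lemma inner_mem {μ2 : Gd.Assignment Bool} {σ τ : Gd.Strategy} {s0 : Bool × Bool}
    {lam' : ℕ → Bool × Bool}
    (hout : lam' ∈ outcomes Gd μ2 [(({()} : Set Unit), false), (({()} : Set Unit), true)] s0)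
    (h1 : μ2 true = some σ) (h2 : μ2 false = some τ)
    (hσ : ∀ a h s, σ.f a h s = ({(true, true), (false, false)} : Set (Bool × Bool)))
    {c : Set (Bool × Bool)} (hτ : ∀ a h s, τ.f a h s = c)
    {e : Set (Bool × Bool)}
    (he : (({(true, true), (false, false)} : Set (Bool × Bool)) ∩ c) = e)
    (hene : e.Nonempty) :
    lam' (0 + 1) ∈ e := by
  have hc := hout.2.2 0
  rw [ctx2_eval μ2 σ τ h1 h2, hσ, hτ, he, if_pos hene] at hc
  exact hc

/-- The invariant inner step of ψ9 in `Gd`: if variable `true` is assigned a strategy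
with constant choice `{(true,true),(false,false)}`, then at any state both inner
conjuncts of ψ9 hold. -/
lemma inner_good (μ : Gd.Assignment Bool) (σ : Gd.Strategy) (h1 : μ true = some σ)
    (hσ : ∀ a h s, σ.f a h s = ({(true, true), (false, false)} : Set (Bool × Bool)))
    (lam : ℕ → Bool × Bool) :
    SatP Gd μ [(({()} : Set Unit), true)] lam
      (.pand (.ofState (.exq false (.bind {()} false (.pnext (.ofState (.atom ()))))))
             (.ofState (.exq false (.bind {()} false
                (.pnext (.pnot (.ofState (.atom ())))))))) := by
  constructor
  · refine ⟨gPair true true, ?_⟩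
    intro lam' hout
    have hc := inner_mem hout (by erw [upd_tf]; exact h1) (upd_ff _ _) hσ
      (fun _ _ _ => rfl) DCp ⟨(true, true), rfl⟩
    rw [Set.mem_singleton_iff] at hc
    show ((lam' (0 + 1)).1 = true)
    rw [hc]
  · refine ⟨gPair false false, ?_⟩
    intro lam' hout
    have hc := inner_mem hout (by erw [upd_tf]; exact h1) (upd_ff _ _) hσ
      (fun _ _ _ => rfl) DCn ⟨(false, false), rfl⟩
    rw [Set.mem_singleton_iff] at hc
    show ¬ ((lam' (0 + 1)).1 = true)
    rw [hc]
    simp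

/-- ψ9 holds everywhere in `Gd` (USL semantics). -/
theorem uslGd (s : Bool × Bool) : USLTrue Gd s (psi9 () () true false) := by
  refine ⟨gPair true false, ?_⟩
  intro lam hlam hcon
  obtain ⟨i, hi, -⟩ := hcon
  refine hi ?_
  apply inner_good _ ((gPair true false).shift (histOf lam i))
  · unfold NATS.Assignment.shift
    erw [upd_tt]
    rfl
  · intro a h s
    rfl

/-- ψ9 fails everywhere in `Bd` (USL semantics). -/
theorem uslBd (s : Bool) : ¬ USLTrue Bd s (psi9 () () true false) := by
  rintro ⟨σ, hb⟩
  have h2 := hb (fun _ => s) (mem_outcomes_Bd _ _ _ _ rfl)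
  apply h2
  refine ⟨0, ?_, fun j hj => absurd hj (Nat.not_lt_zero j)⟩
  rintro ⟨hp, -⟩
  obtain ⟨τ, hτ⟩ := hp
  have h3 := hτ (fun n => if n = 0 then s else false) (mem_outcomes_Bd _ _ _ _ rfl)
  have h4 : (false : Bool) = true := h3
  exact Bool.noConfusion h4

/-- there is no SL sentence (over a single agent and atomic
proposition p) equivalent over all NATS and states to the USL sentence ψ9. -/
theorem sustainable_control_not_SL_expressible :
    ¬ ∃ (X : Type) (φ : StateForm Unit Unit X), IsSLS φ ∧ φ.IsSentence ∧
      ∀ (St : Type) (M : NATS Unit St Unit) (s : St),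
        SLTrue M s φ ↔ USLTrue M s (psi9 () () true false) := by
  rintro ⟨X, φ, hSL, -, hiff⟩
  have h1 : SLTrue Gd (true, true) φ := (hiff _ Gd (true, true)).mpr (uslGd _)
  have h2 : SLTrue Bd true φ :=
    (satS_iff φ hSL (emptyAsg Gd X) (emptyAsg Bd X) (fun _ => ⟨fun _ => rfl, fun _ => rfl⟩) []
      goodK_nil (true, true)).mp h1
  exact uslBd true ((hiff _ Bd true).mp h2)

end USL
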